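/- Let S be an orthodox semigroup, a a nongroup element, b an inverse of a, ab = a²b², and S = ⟨a,b⟩. Then every element of S can be written in the form aⁱbᵐaⁿbʲ where i, j ∈ {0,1}, m, n ≥ 0, and either (m > i and n = j = 0), or (m = i = 0 and n ≥ 1), or (m > i and n > j). -/

import Mathlib

namespace PaperStmt

/-- `S` is a regular semigroup. -/
def RegularSgp (S : Type*) [Semigroup S] : Prop := ∀ x : S, ∃ y, x * y * x = x

/-- The idempotents of `S` form a subsemigroup. -/
def IdemClosed (S : Type*) [Semigroup S] : Prop :=
  ∀ e f : S, e * e = e → f * f = f → (e * f) * (e * f) = e * f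

/-- An orthodox semigroup: regular with idempotents closed under multiplication. -/
def Orthodox (S : Type*) [Semigroup S] : Prop := RegularSgp S ∧ IdemClosed S

/-- Green's R-relation in a monoid. -/
def GreenRM {M : Type*} [Monoid M] (x y : M) : Prop :=
  (∃ s, x = y * s) ∧ (∃ s, y = x * s)

/-- Green's L-relation in a monoid. -/
def GreenLM {M : Type*} [Monoid M] (x y : M) : Prop :=
  (∃ s, x = s * y) ∧ (∃ s, y = s * x)

/-- Green's R-relation on a semigroup, computed in S¹ = WithOne S. -/
def GreenR {S : Type*} [Semigroup S] (x y : S) : Prop :=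
  GreenRM (x : WithOne S) (y : WithOne S)

/-- Green's L-relation on a semigroup. -/
def GreenL {S : Type*} [Semigroup S] (x y : S) : Prop :=
  GreenLM (x : WithOne S) (y : WithOne S)

/-- Green's H-relation. -/
def GreenH {S : Type*} [Semigroup S] (x y : S) : Prop := GreenR x y ∧ GreenL x y

/-- Green's D-relation, D = L ∘ R. -/
def GreenD {S : Type*} [Semigroup S] (x y : S) : Prop :=
  ∃ z : S, GreenL x z ∧ GreenR z y

/-- `a` belongs to some subgroup of `S`. -/
def InSubgroup {S : Type*} [Semigroup S] (a : S) : Prop :=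
  ∃ G : Set S, a ∈ G ∧ (∀ x ∈ G, ∀ y ∈ G, x * y ∈ G) ∧
    ∃ e ∈ G, (∀ x ∈ G, e * x = x ∧ x * e = x) ∧ ∀ x ∈ G, ∃ y ∈ G, x * y = e ∧ y * x = e

/-- The H-class of `a` is a group with identity element `e`. -/
def HClassGroupWithId {S : Type*} [Semigroup S] (a e : S) : Prop :=
  GreenH e a ∧ e * e = e ∧ (∀ x, GreenH x a → e * x = x ∧ x * e = x) ∧
    ∀ x, GreenH x a → ∃ y, GreenH y a ∧ x * y = e ∧ y * x = e

abbrev NF {M : Type*} [Monoid M] (A B w : M) : Prop :=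
  ∃ i j m n : ℕ, i ≤ 1 ∧ j ≤ 1 ∧ w = A^i*B^m*A^n*B^j ∧
    ((i < m ∧ n = 0 ∧ j = 0) ∨ (m = 0 ∧ i = 0 ∧ 1 ≤ n) ∨ (i < m ∧ j < n))

lemma step {M : Type*} [Monoid M] {A B : M}
    (h1 : A * B * A = A) (h2 : B * A * B = B) (h3 : A * B = A * A * (B * B))
    (x y : M) (hx : x = A ∨ x = B) (hy : y = 1 ∨ NF A B y) : NF A B (x * y) := by
  have r1 : ∀ z, A*(B*(A*z)) = A*z := fun z => by rw [← mul_assoc, ← mul_assoc, h1]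
  have r1' : A*(B*A) = A := by rw [← mul_assoc, h1]
  have r2 : ∀ z, B*(A*(B*z)) = B*z := fun z => by rw [← mul_assoc, ← mul_assoc, h2]
  have r2' : B*(A*B) = B := by rw [← mul_assoc, h2]
  have r3' : A*(A*(B*B)) = A*B := by rw [← mul_assoc, ← h3]
  have r3 : ∀ z, A*(A*(B*(B*z))) = A*(B*z) := fun z => by
    rw [show A*(A*(B*(B*z))) = A*A*(B*B)*z by simp only [mul_assoc], ← h3, mul_assoc]
  rcases hy with rfl | ⟨i, j, m, n, hi, hj, rfl, hc⟩
  · rcases hx with rfl | rfl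
    · exact ⟨0, 0, 0, 1, by omega, by omega, by simp, by omega⟩
    · exact ⟨0, 0, 1, 0, by omega, by omega, by simp, by omega⟩
  · rcases hc with ⟨him, rfl, rfl⟩ | ⟨rfl, rfl, hn⟩ | ⟨him, hjn⟩
    · -- Case 1 : y = A^i B^m, i < m
      rcases hx with rfl | rfl
      · interval_cases i
        · obtain ⟨k, rfl⟩ : ∃ k, m = k+1 := ⟨m-1, by omega⟩
          cases k with
          | zero => exact ⟨0, 1, 0, 1, by omega, by omega, by
              simp only [pow_succ', pow_zero, pow_one, one_mul, mul_one, mul_assoc,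
                r1, r1', r2, r2', r3, r3'], by omega⟩
          | succ t => exact ⟨1, 0, t+1+1, 0, by omega, by omega, by
              simp only [pow_succ', pow_zero, pow_one, one_mul, mul_one, mul_assoc,
                r1, r1', r2, r2', r3, r3'], by omega⟩
        · obtain ⟨k, rfl⟩ : ∃ k, m = k+1+1 := ⟨m-2, by omega⟩
          cases k with
          | zero => exact ⟨0, 1, 0, 1, by omega, by omega, by
              simp only [pow_succ', pow_zero, pow_one, one_mul, mul_one, mul_assoc,
                r1, r1', r2, r2', r3, r3'], by omega⟩
          | succ t => exact ⟨1, 0, t+1+1, 0, by omega, by omega, by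
              simp only [pow_succ', pow_zero, pow_one, one_mul, mul_one, mul_assoc,
                r1, r1', r2, r2', r3, r3'], by omega⟩
      · interval_cases i
        · exact ⟨0, 0, m+1, 0, by omega, by omega, by
            simp only [pow_succ', pow_zero, pow_one, one_mul, mul_one, mul_assoc,
              r1, r1', r2, r2', r3, r3'], by omega⟩
        · obtain ⟨k, rfl⟩ : ∃ k, m = k+1+1 := ⟨m-2, by omega⟩
          exact ⟨0, 0, k+1+1, 0, by omega, by omega, by
            simp only [pow_succ', pow_zero, pow_one, one_mul, mul_one, mul_assoc,
              r1, r1', r2, r2', r3, r3'], by omega⟩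
    · -- Case 2 : y = A^n B^j, n ≥ 1
      rcases hx with rfl | rfl
      · exact ⟨0, j, 0, n+1, by omega, hj, by
          simp only [pow_succ', pow_zero, pow_one, one_mul, mul_one, mul_assoc,
            r1, r1', r2, r2', r3, r3'], by omega⟩
      · interval_cases j
        · exact ⟨0, 0, 1, n, by omega, by omega, by
            simp only [pow_succ', pow_zero, pow_one, one_mul, mul_one, mul_assoc,
              r1, r1', r2, r2', r3, r3'], by omega⟩
        · obtain ⟨t, rfl⟩ : ∃ t, n = t+1 := ⟨n-1, by omega⟩
          cases t with
          | zero => exact ⟨0, 0, 1, 0, by omega, by omega, by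
              simp only [pow_succ', pow_zero, pow_one, one_mul, mul_one, mul_assoc,
                r1, r1', r2, r2', r3, r3'], by omega⟩
          | succ s => exact ⟨0, 1, 1, s+1+1, by omega, by omega, by
              simp only [pow_succ', pow_zero, pow_one, one_mul, mul_one, mul_assoc,
                r1, r1', r2, r2', r3, r3'], by omega⟩
    · -- Case 3 : y = A^i B^m A^n B^j, i < m, j < n
      rcases hx with rfl | rfl
      · interval_cases i
        · obtain ⟨k, rfl⟩ : ∃ k, m = k+1 := ⟨m-1, by omega⟩
          cases k with
          | zero =>
            obtain ⟨t, rfl⟩ : ∃ t, n = t+1 := ⟨n-1, by omega⟩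
            exact ⟨0, j, 0, t+1, by omega, hj, by
              simp only [pow_succ', pow_zero, pow_one, one_mul, mul_one, mul_assoc,
                r1, r1', r2, r2', r3, r3'], by omega⟩
          | succ u => exact ⟨1, j, u+1+1, n, by omega, hj, by
              simp only [pow_succ', pow_zero, pow_one, one_mul, mul_one, mul_assoc,
                r1, r1', r2, r2', r3, r3'], by omega⟩
        · obtain ⟨k, rfl⟩ : ∃ k, m = k+1+1 := ⟨m-2, by omega⟩
          cases k with
          | zero =>
            obtain ⟨t, rfl⟩ : ∃ t, n = t+1 := ⟨n-1, by omega⟩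
            exact ⟨0, j, 0, t+1, by omega, hj, by
              simp only [pow_succ', pow_zero, pow_one, one_mul, mul_one, mul_assoc,
                r1, r1', r2, r2', r3, r3'], by omega⟩
          | succ u => exact ⟨1, j, u+1+1, n, by omega, hj, by
              simp only [pow_succ', pow_zero, pow_one, one_mul, mul_one, mul_assoc,
                r1, r1', r2, r2', r3, r3'], by omega⟩
      · interval_cases i
        · exact ⟨0, j, m+1, n, by omega, hj, by
            simp only [pow_succ', pow_zero, pow_one, one_mul, mul_one, mul_assoc,
              r1, r1', r2, r2', r3, r3'], by omega⟩
        · obtain ⟨k, rfl⟩ : ∃ k, m = k+1+1 := ⟨m-2, by omega⟩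
          exact ⟨0, j, k+1+1, n, by omega, hj, by
            simp only [pow_succ', pow_zero, pow_one, one_mul, mul_one, mul_assoc,
              r1, r1', r2, r2', r3, r3'], by omega⟩

theorem stmt10 {S : Type*} [Semigroup S] (hO : Orthodox S) (a b : S)
    (hgen : Subsemigroup.closure ({a, b} : Set S) = ⊤)
    (h1 : a * b * a = a) (h2 : b * a * b = b)
    (h3 : a * b = a * a * (b * b)) (hng : ¬ InSubgroup a) :
    ∀ s : S, ∃ i j m n : ℕ, i ≤ 1 ∧ j ≤ 1 ∧
      (s : WithOne S) =
        (a : WithOne S) ^ i * (b : WithOne S) ^ m * (a : WithOne S) ^ n * (b : WithOne S) ^ j ∧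
      ((i < m ∧ n = 0 ∧ j = 0) ∨ (m = 0 ∧ i = 0 ∧ 1 ≤ n) ∨ (i < m ∧ j < n)) := by
  intro s
  have hA1 : (a : WithOne S) * b * a = a := by exact_mod_cast h1
  have hA2 : (b : WithOne S) * a * b = b := by exact_mod_cast h2
  have hA3 : (a : WithOne S) * b = a * a * (b * b) := by exact_mod_cast h3
  have hs : s ∈ Subsemigroup.closure ({a, b} : Set S) := by rw [hgen]; exact Subsemigroup.mem_top s
  have hmem : (s : WithOne S) ∈
      Submonoid.closure ({(a : WithOne S), (b : WithOne S)} : Set (WithOne S)) := by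
    have hle : Subsemigroup.closure ({a, b} : Set S) ≤
        Subsemigroup.comap (WithOne.coeMulHom)
          ((Submonoid.closure ({(a : WithOne S), (b : WithOne S)})).toSubsemigroup) := by
      apply Subsemigroup.closure_le.mpr
      intro x hx
      rcases hx with rfl | rfl
      · exact Submonoid.subset_closure (Or.inl rfl)
      · exact Submonoid.subset_closure (Or.inr rfl)
    have h' := hle hs
    rw [Subsemigroup.mem_comap] at h'
    exact h'
  obtain ⟨l, hl, hprod⟩ := Submonoid.exists_list_of_mem_closure hmem
  have main : ∀ L : List (WithOne S),
      (∀ y ∈ L, y ∈ ({(a : WithOne S), (b : WithOne S)} : Set (WithOne S))) →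
      L.prod = 1 ∨ NF (a : WithOne S) (b : WithOne S) L.prod := by
    intro L
    induction L with
    | nil => intro _; left; simp
    | cons c t ih =>
      intro hmem'
      right
      rw [List.prod_cons]
      refine step hA1 hA2 hA3 c t.prod ?_ (ih ?_)
      · have := hmem' c (by simp); simpa using this
      · exact fun y hy => hmem' y (List.mem_cons_of_mem _ hy)
  rcases main l hl with h1' | h'
  · rw [hprod] at h1'; exact absurd h1' (WithOne.coe_ne_one)
  · rw [hprod] at h'; exact h'


end PaperStmt
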